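/- Memoryless transmission fails in the erasure example: Let W be the binary erasure channel BEC(p) on inputs {0,1} and outputs {0,1,e}: W(x|x) = 1−p, W(e|x) = p. Let W̄(·|·,0) and W̄(·|·,1) be the channels: W̄(0|0,0) = (1−p)(1−r), W̄(1|0,0) = (1−p)r, W̄(e|0,0) = p, W̄(1|1,0) = 1−p, W̄(e|1,0) = p; and symmetrically W̄(1|1,1) = (1−p)(1−r), W̄(0|1,1) = (1−p)r, W̄(e|1,1) = p, W̄(0|0,1) = 1−p, W̄(e|0,1) = p. Then for every input distribution P_X on {0,1}, choosing the state distribution P_{S̄} with P_{S̄}(0) = 1 − P_X(0) makes the single-letter output distribution under H1, Q̄(y) := Σ_{x,s̄} P_X(x) P_{S̄}(s̄) W̄(y|x,s̄), equal to the output distribution under H0, Q(y) := Σ_x P_X(x) W(y|x). Consequently the Chernoff–Stein exponent of any memoryless (i.i.d.-input) private-randomness scheme is zero. -/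

import Mathlib

open Finset

/-- `p` is a probability mass function. -/
def IsDist {Z : Type*} [Fintype Z] (p : Z → ℝ) : Prop :=
  (∀ z, 0 ≤ p z) ∧ ∑ z, p z = 1

/-- The output alphabet `{0, 1, e}` of the erasure example. -/
inductive Out : Type
  | o0 | o1 | oe
deriving DecidableEq

instance : Fintype Out where
  elems := {Out.o0, Out.o1, Out.oe}
  complete := by intro x; cases x <;> simp

/-- The binary erasure channel `BEC(p)`: `W(x|x) = 1-p`, `W(e|x) = p`
(inputs `false = 0`, `true = 1`). -/
noncomputable def Wbec (p : ℝ) : Bool → Out → ℝ :=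
  fun x y =>
    match x, y with
    | false, Out.o0 => 1 - p
    | false, Out.o1 => 0
    | false, Out.oe => p
    | true,  Out.o0 => 0
    | true,  Out.o1 => 1 - p
    | true,  Out.oe => p

/-- The state-dependent channel `W̄(·|·,s̄)` of the erasure example (states
`false = 0`, `true = 1`): `W̄(·|·,0)` transmits input `1` cleanly (up to erasure) and
flips input `0` to `1` with probability `(1-p)r`; `W̄(·|·,1)` is symmetric. -/
noncomputable def WbarEx (p r : ℝ) : Bool → Bool → Out → ℝ :=
  fun x s y =>
    match x, s, y with
    | false, false, Out.o0 => (1 - p) * (1 - r)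
    | false, false, Out.o1 => (1 - p) * r
    | false, false, Out.oe => p
    | true,  false, Out.o0 => 0
    | true,  false, Out.o1 => 1 - p
    | true,  false, Out.oe => p
    | false, true,  Out.o0 => 1 - p
    | false, true,  Out.o1 => 0
    | false, true,  Out.oe => p
    | true,  true,  Out.o0 => (1 - p) * r
    | true,  true,  Out.o1 => (1 - p) * (1 - r)
    | true,  true,  Out.oe => p

/-- The i.i.d. output distribution on `Y^n` under `H0` for a memoryless scheme with
single-letter input distribution `pX`. -/
noncomputable def QN (p : ℝ) (pX : Bool → ℝ) {n : ℕ} (y : Fin n → Out) : ℝ :=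
  ∏ i : Fin n, ∑ x, pX x * Wbec p x (y i)

/-- The output distribution on `Y^n` under `H1` for a memoryless scheme with
single-letter input distribution `pX` when the adversary picks its state word according
to `ν` (independently of the inputs). -/
noncomputable def QbarN (p r : ℝ) (pX : Bool → ℝ) {n : ℕ}
    (ν : (Fin n → Bool) → ℝ) (y : Fin n → Out) : ℝ :=
  ∑ sv : Fin n → Bool, ν sv * ∏ i : Fin n, ∑ x, pX x * WbarEx p r x (sv i) (y i)

/-- Type-1 error of the detector `dec` for the memoryless scheme (`true` = decide `H1`;
under `H0` there is no adversary choice). -/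
noncomputable def alphaIID (p : ℝ) (pX : Bool → ℝ) {n : ℕ}
    (dec : (Fin n → Out) → Bool) : ℝ :=
  ∑ y : Fin n → Out, QN p pX y * (if dec y = true then 1 else 0)

/-- Worst-case type-2 error of the detector `dec` for the memoryless scheme. -/
noncomputable def betaIID (p r : ℝ) (pX : Bool → ℝ) {n : ℕ}
    (dec : (Fin n → Out) → Bool) : ℝ :=
  ⨆ ν : {ν : (Fin n → Bool) → ℝ // IsDist ν},
    ∑ y : Fin n → Out, QbarN p r pX ν.1 y * (if dec y = false then 1 else 0)

/-- `β_n^ε` for the memoryless scheme with input distribution `pX`. -/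
noncomputable def betaOptIID (p r : ℝ) (pX : Bool → ℝ) (n : ℕ) (ε : ℝ) : ℝ :=
  sInf {b | ∃ dec : (Fin n → Out) → Bool, alphaIID p pX dec ≤ ε ∧ b = betaIID p r pX dec}


section Aux

lemma sum_out (f : Out → ℝ) : ∑ y, f y = f .o0 + f .o1 + f .oe := by
  rw [show (Finset.univ : Finset Out) = {Out.o0, Out.o1, Out.oe} from rfl]
  simp [Finset.sum_insert]; ring

lemma Wbar_row (p r : ℝ) (x s : Bool) : ∑ y, WbarEx p r x s y = 1 := by
  rw [sum_out]; cases x <;> cases s <;> simp [WbarEx] <;> ring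

lemma Wbar_nonneg (p r : ℝ) (hp : p ∈ Set.Ioo (0:ℝ) 1) (hr : r ∈ Set.Ioo (0:ℝ) 1)
    (x s : Bool) (y : Out) : 0 ≤ WbarEx p r x s y := by
  obtain ⟨hp0, hp1⟩ := hp; obtain ⟨hr0, hr1⟩ := hr
  cases x <;> cases s <;> cases y <;> simp [WbarEx] <;> nlinarith

lemma match1 (p r : ℝ) (pX : Bool → ℝ) (hpX : IsDist pX) (y : Out) :
    (∑ x, ∑ s, pX x * (if s = false then 1 - pX false else pX false) * WbarEx p r x s y)
      = ∑ x, pX x * Wbec p x y := by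
  have hb : pX true = 1 - pX false := by
    have := hpX.2; simp [Fintype.sum_bool] at this; linarith
  cases y <;> simp [Fintype.sum_bool, WbarEx, Wbec, hb] <;> ring

/-- The matching state distribution. -/
noncomputable def pS (pX : Bool → ℝ) : Bool → ℝ :=
  fun s => if s = false then 1 - pX false else pX false

lemma pS_isDist (pX : Bool → ℝ) (hpX : IsDist pX) : IsDist (pS pX) := by
  have h0 := hpX.1 false
  have h1 := hpX.1 true
  have hb : pX true = 1 - pX false := by
    have := hpX.2; simp [Fintype.sum_bool] at this; linarith
  constructor
  · intro s; cases s <;> simp [pS] <;> linarith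
  · simp [Fintype.sum_bool, pS]

/-- The matching product state-word distribution. -/
noncomputable def nuStar (pX : Bool → ℝ) (n : ℕ) : (Fin n → Bool) → ℝ :=
  fun sv => ∏ i, pS pX (sv i)

lemma nuStar_isDist (pX : Bool → ℝ) (hpX : IsDist pX) (n : ℕ) :
    IsDist (nuStar pX n) := by
  obtain ⟨hnn, hsum⟩ := pS_isDist pX hpX
  constructor
  · intro sv; exact Finset.prod_nonneg fun i _ => hnn _
  · rw [show (∑ sv : Fin n → Bool, nuStar pX n sv)
        = ∏ i : Fin n, ∑ s, pS pX s from by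
      rw [Finset.prod_univ_sum]; rw [Fintype.piFinset_univ]; rfl]
    rw [hsum, Finset.prod_const_one]

lemma QbarN_star (p r : ℝ) (pX : Bool → ℝ) (hpX : IsDist pX) {n : ℕ}
    (y : Fin n → Out) : QbarN p r pX (nuStar pX n) y = QN p pX y := by
  unfold QbarN QN nuStar
  have : ∀ sv : Fin n → Bool,
      (∏ i, pS pX (sv i)) * ∏ i : Fin n, ∑ x, pX x * WbarEx p r x (sv i) (y i)
      = ∏ i : Fin n, (pS pX (sv i) * ∑ x, pX x * WbarEx p r x (sv i) (y i)) := by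
    intro sv; rw [Finset.prod_mul_distrib]
  simp_rw [this]
  rw [show (∑ sv : Fin n → Bool,
      ∏ i : Fin n, (pS pX (sv i) * ∑ x, pX x * WbarEx p r x (sv i) (y i)))
      = ∏ i : Fin n, ∑ s, (pS pX s * ∑ x, pX x * WbarEx p r x s (y i)) from by
    rw [Finset.prod_univ_sum]; rw [Fintype.piFinset_univ]]
  refine Finset.prod_congr rfl fun i _ => ?_
  have := match1 p r pX hpX (y i)
  rw [← this]
  rw [Finset.sum_comm]
  refine Finset.sum_congr rfl fun s _ => ?_
  rw [Finset.mul_sum]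
  refine Finset.sum_congr rfl fun x _ => ?_
  unfold pS; ring

lemma sum_QN (p : ℝ) (pX : Bool → ℝ) (hpX : IsDist pX) (n : ℕ) :
    ∑ y : Fin n → Out, QN p pX (n := n) y = 1 := by
  unfold QN
  rw [show (∑ y : Fin n → Out, ∏ i : Fin n, ∑ x, pX x * Wbec p x (y i))
      = ∏ i : Fin n, ∑ z : Out, ∑ x, pX x * Wbec p x z from by
    rw [Finset.prod_univ_sum]; rw [Fintype.piFinset_univ]]
  have h1 : ∀ z : Out, True := fun _ => trivial
  have : (∑ z : Out, ∑ x, pX x * Wbec p x z) = 1 := by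
    rw [Finset.sum_comm]
    have : ∀ x : Bool, (∑ z : Out, pX x * Wbec p x z) = pX x := by
      intro x
      rw [← Finset.mul_sum, show (∑ z : Out, Wbec p x z) = 1 from by
        rw [sum_out]; cases x <;> simp [Wbec] <;> ring_nf, mul_one]
    simp_rw [this]; exact hpX.2
  rw [this, Finset.prod_const_one]

lemma QN_nonneg (p : ℝ) (hp : p ∈ Set.Ioo (0:ℝ) 1) (pX : Bool → ℝ) (hpX : IsDist pX)
    {n : ℕ} (y : Fin n → Out) : 0 ≤ QN p pX y := by
  refine Finset.prod_nonneg fun i _ => Finset.sum_nonneg fun x _ => ?_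
  refine mul_nonneg (hpX.1 x) ?_
  obtain ⟨hp0, hp1⟩ := hp
  cases x <;> cases (y i) <;> simp [Wbec] <;> linarith

lemma QbarN_nonneg (p r : ℝ) (hp : p ∈ Set.Ioo (0:ℝ) 1) (hr : r ∈ Set.Ioo (0:ℝ) 1)
    (pX : Bool → ℝ) (hpX : IsDist pX) {n : ℕ} (ν : (Fin n → Bool) → ℝ)
    (hν : IsDist ν) (y : Fin n → Out) : 0 ≤ QbarN p r pX ν y := by
  refine Finset.sum_nonneg fun sv _ => mul_nonneg (hν.1 sv) ?_
  refine Finset.prod_nonneg fun i _ => Finset.sum_nonneg fun x _ =>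
    mul_nonneg (hpX.1 x) (Wbar_nonneg p r hp hr _ _ _)

lemma sum_QbarN (p r : ℝ) (pX : Bool → ℝ) (hpX : IsDist pX) {n : ℕ}
    (ν : (Fin n → Bool) → ℝ) (hν : IsDist ν) :
    ∑ y : Fin n → Out, QbarN p r pX ν y = 1 := by
  unfold QbarN
  rw [Finset.sum_comm]
  have key : ∀ sv : Fin n → Bool,
      (∑ y : Fin n → Out, ν sv * ∏ i : Fin n, ∑ x, pX x * WbarEx p r x (sv i) (y i))
        = ν sv := by
    intro sv
    rw [← Finset.mul_sum]
    rw [show (∑ y : Fin n → Out, ∏ i : Fin n, ∑ x, pX x * WbarEx p r x (sv i) (y i))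
        = ∏ i : Fin n, ∑ z : Out, ∑ x, pX x * WbarEx p r x (sv i) z from by
      rw [Finset.prod_univ_sum]; rw [Fintype.piFinset_univ]]
    have h1 : ∀ i : Fin n, (∑ z : Out, ∑ x, pX x * WbarEx p r x (sv i) z) = 1 := by
      intro i
      rw [Finset.sum_comm]
      have : ∀ x : Bool, (∑ z : Out, pX x * WbarEx p r x (sv i) z) = pX x := by
        intro x; rw [← Finset.mul_sum, Wbar_row, mul_one]
      simp_rw [this]; exact hpX.2
    simp only [h1, Finset.prod_const_one, mul_one]
  simp_rw [key]; exact hν.2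

end Aux

/-- Memoryless transmission fails in the erasure example: for every input distribution
`P_X`, choosing `P_{S̄}(0) = 1 - P_X(0)` matches the single-letter output distributions
under the two hypotheses; consequently the Chernoff–Stein exponent of every memoryless
(i.i.d.-input) private-randomness scheme is zero. -/
theorem memoryless_fails_erasure_example
    (p r : ℝ) (hp : p ∈ Set.Ioo (0:ℝ) 1) (hr : r ∈ Set.Ioo (0:ℝ) 1)
    (pX : Bool → ℝ) (hpX : IsDist pX) :
    (∀ y : Out,
      (∑ x, ∑ s, pX x * (if s = false then 1 - pX false else pX false) *
          WbarEx p r x s y) =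
        ∑ x, pX x * Wbec p x y) ∧
    (∀ ε : ℝ, ε ∈ Set.Ioo (0:ℝ) 1 →
      Filter.liminf (fun n : ℕ => -(1/(n:ℝ)) * Real.log (betaOptIID p r pX n ε))
        Filter.atTop = 0) := by
  refine ⟨fun y => match1 p r pX hpX y, fun ε hε => ?_⟩
  obtain ⟨hε0, hε1⟩ := hε
  -- betaOptIID is sandwiched between 1 - ε and 1
  have hbound : ∀ n : ℕ, 1 - ε ≤ betaOptIID p r pX n ε ∧ betaOptIID p r pX n ε ≤ 1 := by
    intro n
    have hNE : Nonempty {ν : (Fin n → Bool) → ℝ // IsDist ν} :=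
      ⟨⟨nuStar pX n, nuStar_isDist pX hpX n⟩⟩
    -- every candidate value of the sup is at most 1
    have hle1 : ∀ (dec : (Fin n → Out) → Bool)
        (ν : {ν : (Fin n → Bool) → ℝ // IsDist ν}),
        (∑ y : Fin n → Out, QbarN p r pX ν.1 y * (if dec y = false then 1 else 0)) ≤ 1 := by
      intro dec ν
      calc (∑ y : Fin n → Out, QbarN p r pX ν.1 y * (if dec y = false then 1 else 0))
          ≤ ∑ y : Fin n → Out, QbarN p r pX ν.1 y := by
            refine Finset.sum_le_sum fun y _ => ?_
            have h0 := QbarN_nonneg p r hp hr pX hpX ν.1 ν.2 y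
            by_cases h : dec y = false <;> simp [h] <;> linarith
        _ = 1 := sum_QbarN p r pX hpX ν.1 ν.2
    have hbdd : ∀ dec : (Fin n → Out) → Bool,
        BddAbove (Set.range fun ν : {ν : (Fin n → Bool) → ℝ // IsDist ν} =>
          ∑ y : Fin n → Out, QbarN p r pX ν.1 y * (if dec y = false then 1 else 0)) := by
      intro dec
      exact ⟨1, by rintro b ⟨ν, rfl⟩; exact hle1 dec ν⟩
    -- every element of the feasible set is at least 1 - ε
    have hlow : ∀ b ∈ {b | ∃ dec : (Fin n → Out) → Bool,
        alphaIID p pX dec ≤ ε ∧ b = betaIID p r pX dec}, 1 - ε ≤ b := by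
      rintro b ⟨dec, hα, rfl⟩
      have hstar : (∑ y : Fin n → Out,
          QbarN p r pX (nuStar pX n) y * (if dec y = false then 1 else 0))
          = 1 - alphaIID p pX dec := by
        have h1 : ∀ y : Fin n → Out,
            QbarN p r pX (nuStar pX n) y * (if dec y = false then 1 else 0)
              = QN p pX y - QN p pX y * (if dec y = true then 1 else 0) := by
          intro y
          rw [QbarN_star p r pX hpX y]
          by_cases h : dec y = true <;> simp [h] <;> ring
        simp_rw [h1]
        rw [Finset.sum_sub_distrib, sum_QN p pX hpX n]
        rfl
      have : 1 - ε ≤ (∑ y : Fin n → Out,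
          QbarN p r pX (nuStar pX n) y * (if dec y = false then 1 else 0)) := by
        rw [hstar]; linarith
      refine le_trans this ?_
      exact le_ciSup (hbdd dec) (⟨nuStar pX n, nuStar_isDist pX hpX n⟩ :
        {ν : (Fin n → Bool) → ℝ // IsDist ν})
    -- the trivial detector shows 1 is a feasible value
    have hmem : (1:ℝ) ∈ {b | ∃ dec : (Fin n → Out) → Bool,
        alphaIID p pX dec ≤ ε ∧ b = betaIID p r pX dec} := by
      refine ⟨fun _ => false, ?_, ?_⟩
      · unfold alphaIID; simp; linarith
      · unfold betaIID
        have : (fun ν : {ν : (Fin n → Bool) → ℝ // IsDist ν} =>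
            ∑ y : Fin n → Out, QbarN p r pX ν.1 y *
              (if (fun _ => false) y = false then 1 else 0)) = fun _ => (1:ℝ) := by
          funext ν
          simpa using sum_QbarN p r pX hpX ν.1 ν.2
        rw [this, ciSup_const]
    constructor
    · exact le_csInf ⟨1, hmem⟩ hlow
    · exact csInf_le ⟨1 - ε, hlow⟩ hmem
  -- squeeze -(1/n) log betaOpt between 0 and (1/n)(-log(1-ε))
  have htend : Filter.Tendsto
      (fun n : ℕ => -(1/(n:ℝ)) * Real.log (betaOptIID p r pX n ε))
      Filter.atTop (nhds 0) := by
    have hh : Filter.Tendsto (fun n : ℕ => (1/(n:ℝ)) * (-Real.log (1 - ε)))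
        Filter.atTop (nhds 0) := by
      have := tendsto_one_div_atTop_nhds_zero_nat.mul_const (-Real.log (1 - ε))
      simpa using this
    refine tendsto_of_tendsto_of_tendsto_of_le_of_le tendsto_const_nhds hh ?_ ?_
    · intro n
      obtain ⟨hb1, hb2⟩ := hbound n
      have hpos : 0 < betaOptIID p r pX n ε := by linarith
      have hlog : Real.log (betaOptIID p r pX n ε) ≤ 0 := Real.log_nonpos hpos.le hb2
      show (0:ℝ) ≤ -(1/(n:ℝ)) * Real.log (betaOptIID p r pX n ε)
      have : -(1/(n:ℝ)) * Real.log (betaOptIID p r pX n ε)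
          = (1/(n:ℝ)) * (-Real.log (betaOptIID p r pX n ε)) := by ring
      rw [this]
      exact mul_nonneg (by positivity) (by linarith)
    · intro n
      obtain ⟨hb1, hb2⟩ := hbound n
      have hlog : Real.log (1 - ε) ≤ Real.log (betaOptIID p r pX n ε) :=
        Real.log_le_log (by linarith) hb1
      show -(1/(n:ℝ)) * Real.log (betaOptIID p r pX n ε)
          ≤ (1/(n:ℝ)) * (-Real.log (1 - ε))
      have : -(1/(n:ℝ)) * Real.log (betaOptIID p r pX n ε)
          = (1/(n:ℝ)) * (-Real.log (betaOptIID p r pX n ε)) := by ring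
      rw [this]
      exact mul_le_mul_of_nonneg_left (by linarith) (by positivity)
  exact htend.liminf_eq
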